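/- Let 𝕜 be a commutative ring, k ≥ 1, and R = 𝕜[x_1,…,x_k]/(x_1x_2⋯x_k). For any subsets I, J ⊆ {1,…,k}, multiplication by x_{I∖J} gives a well-defined R-module homomorphism R/(x_J) → R/(x_I), and the R-module map R → Hom_R(R/(x_J), R/(x_I)) sending r to the homomorphism (s mod (x_J)) ↦ (r·x_{I∖J}·s mod (x_I)) is surjective with kernel (x_{I∩J}). In particular, Hom_R(R/(x_J), R/(x_I)) ≅ R/(x_{I∩J}) as R-modules. -/

import Mathlib

open MvPolynomial

/-- The ring `R = 𝕜[x₁,…,x_k]/(x₁x₂⋯x_k)`, with variables indexed by `Fin k`. -/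
abbrev NodalRing (𝕜 : Type*) [CommRing 𝕜] (k : ℕ) : Type _ :=
  MvPolynomial (Fin k) 𝕜 ⧸
    Ideal.span {∏ i : Fin k, (X i : MvPolynomial (Fin k) 𝕜)}

/-- `x_I`: the image in `R` of the monomial `∏_{i ∈ I} x_i` (with `x_∅ = 1`). -/
noncomputable def xgen (𝕜 : Type*) [CommRing 𝕜] (k : ℕ) (I : Finset (Fin k)) :
    NodalRing 𝕜 k :=
  Ideal.Quotient.mk _ (∏ i ∈ I, X i)

section Aux

variable {σ R : Type*} [CommRing R]

lemma myX_dvd_iff_coeff {i : σ} {f : MvPolynomial σ R} :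
    (X i : MvPolynomial σ R) ∣ f ↔ ∀ m : σ →₀ ℕ, m i = 0 → coeff m f = 0 := by
  rw [show (X i : MvPolynomial σ R) = monomial (Finsupp.single i 1) 1 from rfl,
    monomial_one_dvd_iff_modMonomial_eq_zero]
  constructor
  · intro h m hm
    have := congrArg (coeff m) h
    rw [coeff_modMonomial_of_not_le, coeff_zero] at this
    · exact this
    · intro hle
      have := hle i
      simp [Finsupp.single_apply, hm] at this
  · intro h
    ext m
    by_cases hle : Finsupp.single i 1 ≤ m
    · simp [coeff_modMonomial_of_le _ hle]
    · rw [coeff_modMonomial_of_not_le _ hle, coeff_zero]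
      apply h
      by_contra hmi
      exact hle fun j => by
        classical
        rcases eq_or_ne j i with rfl | hji
        · simpa [Finsupp.single_apply] using Nat.one_le_iff_ne_zero.2 hmi
        · simp [Finsupp.single_apply, hji.symm]

lemma prodX_eq_monomial (B : Finset σ) :
    (∏ j ∈ B, X j : MvPolynomial σ R) = monomial (∑ j ∈ B, Finsupp.single j 1) 1 := by
  classical
  induction B using Finset.induction with
  | empty => simp
  | insert _ _ hx ih =>
      rw [Finset.prod_insert hx, Finset.sum_insert hx, ih,
        show (X _ : MvPolynomial σ R) = monomial (Finsupp.single _ 1) 1 from rfl,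
        monomial_mul, one_mul]

lemma X_dvd_of_X_dvd_prodX_mul {i : σ} {B : Finset σ} (hi : i ∉ B) {f : MvPolynomial σ R}
    (h : (X i : MvPolynomial σ R) ∣ (∏ j ∈ B, X j) * f) : (X i : MvPolynomial σ R) ∣ f := by
  classical
  rw [myX_dvd_iff_coeff] at h ⊢
  intro m hm
  have hs : (∑ j ∈ B, Finsupp.single j 1) i = 0 := by
    rw [Finsupp.finset_sum_apply]
    refine Finset.sum_eq_zero fun j hj => ?_
    exact Finsupp.single_eq_of_ne (fun e => hi (e ▸ hj))
  have := h (∑ j ∈ B, Finsupp.single j 1 + m) (by rw [Finsupp.add_apply, hs, hm])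
  rwa [prodX_eq_monomial, coeff_monomial_mul, one_mul] at this

lemma dvd_of_mul_dvd_mul_left_regular {c u v : MvPolynomial σ R} (hc : IsRegular c)
    (h : c * u ∣ c * v) : u ∣ v := by
  obtain ⟨w, hw⟩ := h
  exact ⟨w, hc.left (show c * v = c * (u * w) by rw [hw]; ring)⟩

lemma prodX_dvd_of_dvd_prodX_mul {A B : Finset σ} (hAB : Disjoint A B) {f : MvPolynomial σ R}
    (h : (∏ i ∈ A, X i : MvPolynomial σ R) ∣ (∏ j ∈ B, X j) * f) :
    (∏ i ∈ A, X i : MvPolynomial σ R) ∣ f := by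
  classical
  induction A using Finset.induction generalizing f with
  | empty => simpa using dvd_mul_left f 1
  | @insert a A ha ih =>
      rw [Finset.prod_insert ha] at h ⊢
      have haB : a ∉ B := Finset.disjoint_left.mp hAB (Finset.mem_insert_self a A)
      have h1 : (X a : MvPolynomial σ R) ∣ (∏ j ∈ B, X j) * f :=
        dvd_trans (dvd_mul_right _ _) h
      obtain ⟨g, rfl⟩ := X_dvd_of_X_dvd_prodX_mul haB h1
      have h2 : (X a : MvPolynomial σ R) * (∏ i ∈ A, X i) ∣ X a * ((∏ j ∈ B, X j) * g) := by
        have hring : (∏ j ∈ B, X j) * (X a * g) = X a * ((∏ j ∈ B, X j) * g) := by ring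
        rwa [hring] at h
      have h3 := dvd_of_mul_dvd_mul_left_regular isRegular_X h2
      exact mul_dvd_mul_left _ (ih (hAB.mono_left (Finset.subset_insert a A)) h3)

lemma mem_span_mk_iff {𝕜 : Type*} [CommRing 𝕜] {k : ℕ} (q p : MvPolynomial (Fin k) 𝕜) :
    (Ideal.Quotient.mk _ p : NodalRing 𝕜 k) ∈
        Ideal.span {(Ideal.Quotient.mk _ q : NodalRing 𝕜 k)} ↔
      ∃ b c : MvPolynomial (Fin k) 𝕜, p = q * b + (∏ i : Fin k, X i) * c := by
  rw [Ideal.mem_span_singleton]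
  constructor
  · rintro ⟨z, hz⟩
    obtain ⟨b, rfl⟩ := Ideal.Quotient.mk_surjective z
    rw [← map_mul, Ideal.Quotient.eq, Ideal.mem_span_singleton] at hz
    obtain ⟨c, hc⟩ := hz
    exact ⟨b, c, by linear_combination hc⟩
  · rintro ⟨b, c, rfl⟩
    refine ⟨Ideal.Quotient.mk _ b, ?_⟩
    rw [← map_mul, Ideal.Quotient.eq, Ideal.mem_span_singleton]
    exact ⟨c, by ring⟩

end Aux

set_option maxHeartbeats 1000000 in
/-- **The morphism module `Hom_R(R/(x_J), R/(x_I)) ≅ R/(x_{I∩J})`.**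
Multiplication by `x_{I∖J}` gives a well-defined `R`-linear map
`R/(x_J) → R/(x_I)`, and the `R`-linear map
`R → Hom_R(R/(x_J), R/(x_I))`, `r ↦ (s mod (x_J) ↦ r·x_{I∖J}·s mod (x_I))`,
is surjective with kernel the ideal `(x_{I∩J})`. -/
theorem stmt_8 (𝕜 : Type*) [CommRing 𝕜] (k : ℕ) (hk : 1 ≤ k)
    (I J : Finset (Fin k)) :
    ∃ Φ : NodalRing 𝕜 k →ₗ[NodalRing 𝕜 k]
        ((NodalRing 𝕜 k ⧸ Ideal.span {xgen 𝕜 k J}) →ₗ[NodalRing 𝕜 k]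
          (NodalRing 𝕜 k ⧸ Ideal.span {xgen 𝕜 k I})),
      (∀ r s : NodalRing 𝕜 k,
        Φ r (Submodule.Quotient.mk s)
          = Submodule.Quotient.mk (r * xgen 𝕜 k (I \ J) * s)) ∧
      Function.Surjective Φ ∧
      LinearMap.ker Φ = Ideal.span {xgen 𝕜 k (I ∩ J)} := by
  classical
  -- polynomial-level identities
  have hII : (∏ i ∈ I \ J, X i : MvPolynomial (Fin k) 𝕜) * ∏ i ∈ I ∩ J, X i
      = ∏ i ∈ I, X i := by
    rw [← Finset.prod_union (Finset.disjoint_sdiff_inter I J), Finset.sdiff_union_inter]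
  have hJJ : (∏ i ∈ J \ I, X i : MvPolynomial (Fin k) 𝕜) * ∏ i ∈ I ∩ J, X i
      = ∏ i ∈ J, X i := by
    rw [Finset.inter_comm, ← Finset.prod_union (Finset.disjoint_sdiff_inter J I),
      Finset.sdiff_union_inter]
  have hF : (∏ i : Fin k, X i : MvPolynomial (Fin k) 𝕜)
      = (∏ i ∈ I, X i) * ∏ i ∈ Finset.univ \ I, X i := by
    rw [mul_comm, Finset.prod_sdiff (Finset.subset_univ I)]
  -- R-level identities
  have hxII : xgen 𝕜 k (I \ J) * xgen 𝕜 k (I ∩ J) = xgen 𝕜 k I := by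
    unfold xgen; rw [← map_mul, hII]
  have hwd : xgen 𝕜 k (I \ J) * xgen 𝕜 k J ∈ Ideal.span {xgen 𝕜 k I} := by
    rw [Ideal.mem_span_singleton]
    refine ⟨xgen 𝕜 k (J \ I), ?_⟩
    unfold xgen
    rw [← map_mul, ← map_mul]
    congr 1
    rw [← hII, ← hJJ]; ring
  -- key lemma for surjectivity
  have key1 : ∀ aR : NodalRing 𝕜 k, xgen 𝕜 k J * aR ∈ Ideal.span {xgen 𝕜 k I} →
      ∃ cR : NodalRing 𝕜 k, aR = xgen 𝕜 k (I \ J) * cR := by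
    intro aR haR
    obtain ⟨a, rfl⟩ := Ideal.Quotient.mk_surjective aR
    rw [show xgen 𝕜 k J * Ideal.Quotient.mk _ a = Ideal.Quotient.mk _ ((∏ i ∈ J, X i) * a)
        from (map_mul _ _ _).symm] at haR
    unfold xgen at haR
    rw [mem_span_mk_iff] at haR
    obtain ⟨b, c, hbc⟩ := haR
    have hcan : (∏ i ∈ I ∩ J, X i : MvPolynomial (Fin k) 𝕜) * ((∏ i ∈ J \ I, X i) * a)
        = (∏ i ∈ I ∩ J, X i) * ((∏ i ∈ I \ J, X i) * (b + (∏ i ∈ Finset.univ \ I, X i) * c)) := by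
      rw [hF, ← hII, ← hJJ] at hbc
      linear_combination hbc
    have hcan2 := (isRegular_prod_X (I ∩ J)).left hcan
    have hdvd : (∏ i ∈ I \ J, X i : MvPolynomial (Fin k) 𝕜) ∣ a := by
      apply prodX_dvd_of_dvd_prodX_mul (disjoint_sdiff_sdiff (x := I) (y := J))
      exact ⟨b + (∏ i ∈ Finset.univ \ I, X i) * c, hcan2⟩
    obtain ⟨g, rfl⟩ := hdvd
    exact ⟨Ideal.Quotient.mk _ g, (map_mul _ _ _)⟩
  -- key lemma for the kernel
  have key2 : ∀ rR : NodalRing 𝕜 k, xgen 𝕜 k (I \ J) * rR ∈ Ideal.span {xgen 𝕜 k I} →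
      rR ∈ Ideal.span {xgen 𝕜 k (I ∩ J)} := by
    intro rR hrR
    obtain ⟨r, rfl⟩ := Ideal.Quotient.mk_surjective rR
    rw [show xgen 𝕜 k (I \ J) * Ideal.Quotient.mk _ r
        = Ideal.Quotient.mk _ ((∏ i ∈ I \ J, X i) * r) from (map_mul _ _ _).symm,
      ] at hrR
    unfold xgen at hrR ⊢
    rw [mem_span_mk_iff] at hrR
    obtain ⟨b, c, hbc⟩ := hrR
    have hcan : (∏ i ∈ I \ J, X i : MvPolynomial (Fin k) 𝕜) * r
        = (∏ i ∈ I \ J, X i) * ((∏ i ∈ I ∩ J, X i) * (b + (∏ i ∈ Finset.univ \ I, X i) * c)) := by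
      rw [hF, ← hII] at hbc
      linear_combination hbc
    have hcan2 := (isRegular_prod_X (I \ J)).left hcan
    rw [mem_span_mk_iff]
    exact ⟨b + (∏ i ∈ Finset.univ \ I, X i) * c, 0, by rw [hcan2]; ring⟩
  -- construction of Φ
  set R := NodalRing 𝕜 k with hR
  let μ : R →ₗ[R] R ⧸ Ideal.span {xgen 𝕜 k I} :=
    (Ideal.span {xgen 𝕜 k I}).mkQ ∘ₗ LinearMap.mulLeft R (xgen 𝕜 k (I \ J))
  have hker : Ideal.span {xgen 𝕜 k J} ≤ LinearMap.ker μ := by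
    rw [Ideal.span_le, Set.singleton_subset_iff]
    show μ (xgen 𝕜 k J) = 0
    show Submodule.Quotient.mk (xgen 𝕜 k (I \ J) * xgen 𝕜 k J) = 0
    rwa [Submodule.Quotient.mk_eq_zero]
  let φ₀ := (Ideal.span {xgen 𝕜 k J}).liftQ μ hker
  refine ⟨LinearMap.toSpanSingleton R _ φ₀, ?_⟩
  have hprop : ∀ r s : R, (LinearMap.toSpanSingleton R _ φ₀) r (Submodule.Quotient.mk s)
      = Submodule.Quotient.mk (r * xgen 𝕜 k (I \ J) * s) := by
    intro r s
    show r • φ₀ (Submodule.Quotient.mk s) = _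
    have h1 : φ₀ (Submodule.Quotient.mk s)
        = Submodule.Quotient.mk (xgen 𝕜 k (I \ J) * s) := rfl
    rw [h1, ← Submodule.Quotient.mk_smul, smul_eq_mul]
    congr 1
    ring
  refine ⟨hprop, ?_, ?_⟩
  · -- surjectivity
    intro f
    obtain ⟨a, ha⟩ := Submodule.Quotient.mk_surjective _ (f (Submodule.Quotient.mk 1))
    have h0 : xgen 𝕜 k J * a ∈ Ideal.span {xgen 𝕜 k I} := by
      rw [← Submodule.Quotient.mk_eq_zero]
      have : (Submodule.Quotient.mk (xgen 𝕜 k J * a) :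
          R ⧸ Ideal.span {xgen 𝕜 k I}) = xgen 𝕜 k J • f (Submodule.Quotient.mk 1) := by
        rw [← ha, ← Submodule.Quotient.mk_smul, smul_eq_mul]
      rw [this, ← map_smul, ← Submodule.Quotient.mk_smul, smul_eq_mul, mul_one]
      have hJ0 : (Submodule.Quotient.mk (xgen 𝕜 k J) :
          R ⧸ Ideal.span {xgen 𝕜 k J}) = 0 := by
        rw [Submodule.Quotient.mk_eq_zero]
        exact Ideal.subset_span rfl
      rw [hJ0, map_zero]
    obtain ⟨c, hc⟩ := key1 a h0
    refine ⟨c, ?_⟩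
    apply Submodule.linearMap_qext
    apply LinearMap.ext_ring
    show (LinearMap.toSpanSingleton R _ φ₀) c (Submodule.Quotient.mk 1)
        = f (Submodule.Quotient.mk 1)
    rw [hprop c 1, mul_one, ← ha]
    congr 1
    rw [hc]; ring
  · -- kernel
    ext r
    simp only [LinearMap.mem_ker]
    constructor
    · intro h
      have := hprop r 1
      rw [h, mul_one] at this
      have hmem : xgen 𝕜 k (I \ J) * r ∈ Ideal.span {xgen 𝕜 k I} := by
        rw [← Submodule.Quotient.mk_eq_zero, show xgen 𝕜 k (I \ J) * r
          = r * xgen 𝕜 k (I \ J) from mul_comm _ _, ← this]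
        simp
      exact key2 r hmem
    · intro hr
      obtain ⟨z, rfl⟩ := Ideal.mem_span_singleton.mp hr
      apply Submodule.linearMap_qext
      apply LinearMap.ext_ring
      show (LinearMap.toSpanSingleton R _ φ₀) _ (Submodule.Quotient.mk 1) = _
      rw [hprop _ 1, mul_one]
      rw [show ((0 : (R ⧸ Ideal.span {xgen 𝕜 k J}) →ₗ[R] (R ⧸ Ideal.span {xgen 𝕜 k I})).comp
        (Ideal.span {xgen 𝕜 k J}).mkQ) 1 = 0 from rfl]
      rw [Submodule.Quotient.mk_eq_zero, Ideal.mem_span_singleton]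
      exact ⟨z, by rw [← hxII]; ring⟩
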